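/- Let ε > 0 and let (u_n)_{n≥1} be an approximately subadditive real sequence with constant ε. Then there exist real sequences (v_n)_{n≥1} and (w_n)_{n≥1} such that u_n = v_n + w_n for all n ≥ 1, (v_n)_{n≥1} is subadditive, and 0 ≤ w_n ≤ ε for all n ≥ 1. -/
import Mathlib


/-- An approximately subadditive sequence (with constant ε) decomposes as the
sum of a subadditive sequence and a nonnegative sequence bounded by ε. -/
theorem stmt_12 (ε : ℝ) (hε : 0 < ε) (u : ℕ → ℝ)
    (hu : ∀ n : ℕ, 1 ≤ n → ∀ l : List ℕ, (∀ i ∈ l, 1 ≤ i) → l.sum = n →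
      u n ≤ (l.map u).sum + ε) :
    ∃ v w : ℕ → ℝ,
      (∀ n : ℕ, 1 ≤ n → u n = v n + w n) ∧
      (∀ n : ℕ, 1 ≤ n → ∀ l : List ℕ, (∀ i ∈ l, 1 ≤ i) → l.sum = n →
        v n ≤ (l.map v).sum) ∧
      (∀ n : ℕ, 1 ≤ n → 0 ≤ w n ∧ w n ≤ ε) := by
  set S : ℕ → Set ℝ :=
    fun n => {x | ∃ l : List ℕ, (∀ i ∈ l, 1 ≤ i) ∧ l.sum = n ∧ (l.map u).sum = x}
    with hS
  set v : ℕ → ℝ := fun n => sInf (S n) with hv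
  have hmem : ∀ n : ℕ, 1 ≤ n → u n ∈ S n := by
    intro n hn
    exact ⟨[n], by simpa using hn, by simp, by simp⟩
  have hne : ∀ n : ℕ, 1 ≤ n → (S n).Nonempty := fun n hn => ⟨u n, hmem n hn⟩
  have hlb : ∀ n : ℕ, 1 ≤ n → ∀ x ∈ S n, u n - ε ≤ x := by
    rintro n hn x ⟨l, hl1, hl2, hl3⟩
    have := hu n hn l hl1 hl2
    rw [hl3] at this
    linarith
  have hbdd : ∀ n : ℕ, 1 ≤ n → BddBelow (S n) :=
    fun n hn => ⟨u n - ε, fun x hx => hlb n hn x hx⟩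
  have hvle : ∀ n : ℕ, 1 ≤ n → v n ≤ u n :=
    fun n hn => csInf_le (hbdd n hn) (hmem n hn)
  have hvge : ∀ n : ℕ, 1 ≤ n → u n - ε ≤ v n :=
    fun n hn => le_csInf (hne n hn) (hlb n hn)
  refine ⟨v, fun n => u n - v n, fun n hn => by ring, ?_, fun n hn =>
    ⟨by show (0:ℝ) ≤ u n - v n; linarith [hvle n hn], by show u n - v n ≤ ε; linarith [hvge n hn]⟩⟩
  intro n hn l hl1 hl2
  refine le_of_forall_pos_le_add ?_
  intro δ hδ
  -- build a combined list approximating (l.map v).sum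
  have key : ∀ (l : List ℕ), (∀ i ∈ l, 1 ≤ i) → ∀ δ : ℝ, 0 < δ →
      ∃ L : List ℕ, (∀ i ∈ L, 1 ≤ i) ∧ L.sum = l.sum ∧
        (L.map u).sum < (l.map v).sum + δ := by
    intro l
    induction l with
    | nil => intro _ δ hδ; exact ⟨[], by simp, by simp, by simpa using hδ⟩
    | cons a rest ih =>
        intro hmem' δ hδ
        have ha : 1 ≤ a := hmem' a (by simp)
        have hrest : ∀ i ∈ rest, 1 ≤ i := fun i hi => hmem' i (by simp [hi])
        obtain ⟨L1, hL11, hL12, hL13⟩ := ih hrest (δ/2) (by linarith)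
        have hlt : sInf (S a) < v a + δ/2 := by
          have : v a < v a + δ/2 := by linarith
          simpa [hv] using this
        obtain ⟨x, hxS, hxlt⟩ := exists_lt_of_csInf_lt (hne a ha) hlt
        obtain ⟨La, hLa1, hLa2, hLa3⟩ := hxS
        refine ⟨La ++ L1, ?_, by simp [hLa2, hL12], ?_⟩
        · intro i hi
          rcases List.mem_append.1 hi with h | h
          · exact hLa1 i h
          · exact hL11 i h
        · simp only [List.map_append, List.sum_append, List.map_cons, List.sum_cons]
          rw [hLa3]
          linarith
  obtain ⟨L, hL1, hL2, hL3⟩ := key l hl1 δ hδ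
  have hvL : v n ≤ (L.map u).sum :=
    csInf_le (hbdd n hn) ⟨L, hL1, by rw [hL2, hl2], rfl⟩
  linarith
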